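/- arXiv:1905.02133 — 3 statements merged into one kernel-verified Lean document; each statement's English description precedes it below -/
import Mathlib

section
/- Under the same KKT setup: if a right vertex j ∈ J has a neighbor j' ∈ I with L_{j'} < 1 and z_{(j',j)} > 0, then w_j = R_j·η. -/
open Finset

open Finset

/-- KKT conditions for the program `max ∑_j u j · ln R_j` over nonnegative edge
variables `z` supported on `E`, with `L i = ∑ j, z i j ≤ 1`, `∑ i, L i ≤ m`:
multipliers `θ i ≥ 0`, `η ≥ 0`, `ν e ≥ 0`, stationarity `u j / R j = θ i + η − ν i j`
on each edge, and complementary slackness. -/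
def KKT {I J : Type*} [Fintype I] [Fintype J]
    (E : Finset (I × J)) (m : ℝ) (u : J → ℝ) (z : I → J → ℝ)
    (θ : I → ℝ) (η : ℝ) (ν : I → J → ℝ) : Prop :=
  (∀ i, 0 ≤ θ i) ∧ 0 ≤ η ∧ (∀ i j, 0 ≤ ν i j) ∧
    (∀ i j, (i, j) ∈ E → u j / (∑ i', z i' j) = θ i + η - ν i j) ∧
    (∀ i : I, θ i * ((∑ j, z i j) - 1) = 0) ∧
    (η * ((∑ i, ∑ j, z i j) - m) = 0) ∧
    (∀ i j, ν i j * z i j = 0)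

/-- Claim "sum": under the KKT conditions, if a right vertex `j` has a neighbor
`j' ∈ I` with load `L j' < 1` and `z (j',j) > 0`, then `w j = R j · η`. -/
theorem kkt_weight_eq_rate_mul_eta {I J : Type*} [Fintype I] [Fintype J]
    (E : Finset (I × J)) (m : ℝ) (w : J → ℝ) (z : I → J → ℝ)
    (θ : I → ℝ) (η : ℝ) (ν : I → J → ℝ)
    (hz : ∀ i j, 0 ≤ z i j)
    (hkkt : KKT E m w z θ η ν)
    (j : J) (hR : 0 < ∑ i, z i j)
    (i : I) (hiE : (i, j) ∈ E) (hL : ∑ j', z i j' < 1) (hzij : 0 < z i j) :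
    w j = (∑ i', z i' j) * η := by
  obtain ⟨hθ, hη, hν, hstat, hcsθ, hcsη, hcsν⟩ := hkkt
  have hθi : θ i = 0 := by
    have := hcsθ i
    rcases mul_eq_zero.mp this with h | h
    · exact h
    · linarith
  have hνij : ν i j = 0 := by
    have := hcsν i j
    rcases mul_eq_zero.mp this with h | h
    · exact h
    · linarith
  have h := hstat i j hiE
  rw [hθi, hνij] at h
  field_simp at h
  linarith [h]
end

section
/- Tight-set saturation: in the setting of the previous statement, suppose additionally that J' ⊆ J satisfies w(J')·T = |Γ(J')| and the fractional Hall condition holds for all subsets of J. Then for any nonnegative z with Σ_{e∋j} z_e = w_j·T for all j∈J and Σ_{e∋i} z_e ≤ 1 for all i∈I, every vertex i ∈ Γ(J') satisfies Σ_{e∋i, e between Γ(J') and J'} z_e = 1, i.e., all vertices of Γ(J') are fully saturated via edges to J'. -/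
open Finset

/-- Tight-set saturation: if the fractional Hall condition holds for all
subsets and `J' ⊆ J` is tight (`w(J')·T = |Γ(J')|`), then for any nonnegative
fractional assignment with right-loads `w_j·T` and left-loads at most `1`,
every vertex `i ∈ Γ(J')` receives total mass exactly `1` from the edges to
`J'`. -/
theorem tight_set_saturation {I J : Type*} [Fintype I] [Fintype J]
    [DecidableEq I] [DecidableEq J]
    (E : Finset (I × J)) (w : J → ℝ) (hw : ∀ j, 0 < w j) (T : ℝ) (hT : 0 ≤ T)
    (hHall : ∀ J'' : Finset J,
      (∑ j ∈ J'', w j) * T ≤ (((E.filter (fun e => e.2 ∈ J'')).image Prod.fst).card : ℝ))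
    (J' : Finset J)
    (htight : (∑ j ∈ J', w j) * T =
      (((E.filter (fun e => e.2 ∈ J')).image Prod.fst).card : ℝ))
    (z : I → J → ℝ)
    (hz0 : ∀ i j, 0 ≤ z i j) (hzE : ∀ i j, (i, j) ∉ E → z i j = 0)
    (hR : ∀ j : J, ∑ i, z i j = w j * T) (hL : ∀ i : I, ∑ j, z i j ≤ 1) :
    ∀ i ∈ (E.filter (fun e => e.2 ∈ J')).image Prod.fst,
      ∑ j ∈ J', z i j = 1 := by
  classical
  set Γ := (E.filter (fun e => e.2 ∈ J')).image Prod.fst with hΓ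
  -- f i = mass received by i from J'
  set f : I → ℝ := fun i => ∑ j ∈ J', z i j with hf
  have hzero : ∀ i ∉ Γ, f i = 0 := by
    intro i hi
    apply Finset.sum_eq_zero
    intro j hj
    by_contra hne
    have hE : (i, j) ∈ E := by
      by_contra h; exact hne (hzE i j h)
    exact hi (Finset.mem_image.mpr ⟨(i, j), Finset.mem_filter.mpr ⟨hE, hj⟩, rfl⟩)
  have hsum : ∑ i ∈ Γ, f i = (Γ.card : ℝ) := by
    have h1 : ∑ i ∈ Γ, f i = ∑ i, f i := by
      rw [← Finset.sum_subset (Finset.subset_univ Γ)]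
      intro x _ hx; exact hzero x hx
    have h2 : ∑ i, f i = ∑ j ∈ J', w j * T := by
      rw [hf]
      rw [Finset.sum_comm]
      exact Finset.sum_congr rfl fun j _ => hR j
    rw [h1, h2, ← Finset.sum_mul, htight]
  have hle : ∀ i ∈ Γ, f i ≤ 1 := by
    intro i _
    calc f i ≤ ∑ j, z i j :=
          Finset.sum_le_sum_of_subset_of_nonneg (Finset.subset_univ J')
            (fun j _ _ => hz0 i j)
      _ ≤ 1 := hL i
  intro i hi
  by_contra hne
  have hlt : f i < 1 := lt_of_le_of_ne (hle i hi) hne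
  have : ∑ i ∈ Γ, f i < ∑ _i ∈ Γ, (1 : ℝ) :=
    Finset.sum_lt_sum (fun j hj => hle j hj) ⟨i, hi, hlt⟩
  rw [hsum, Finset.sum_const, nsmul_eq_mul, mul_one] at this
  exact lt_irrefl _ this
end

section
/- Under the KKT conditions for the convex program with modified weights ŵ_{j,t} (i.e., ŵ_{j,t}/R_j = θ_{j'} + η − ν_e for every edge e=(j',j), plus complementary slackness), for every right vertex j with some incident edge carrying positive z: ŵ_{j,t} ≥ R_j·η; and if moreover j has a neighbor j'∈I with L_{j'} < 1, then ŵ_{j,t} = R_j·η. -/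
open Finset

open Finset

/-- Claim "sumnew": for the convex program with modified weights `wHat`, under
the KKT conditions, every right vertex `j` with an incident edge carrying
positive `z` satisfies `wHat j ≥ R j · η`; if moreover `j` has a neighbor
`j' ∈ I` with `L j' < 1` (i.e. `j` is active), then `wHat j = R j · η`. -/
theorem kkt_modified_weights_bounds {I J : Type*} [Fintype I] [Fintype J]
    (E : Finset (I × J)) (m : ℝ) (wHat : J → ℝ) (z : I → J → ℝ)
    (θ : I → ℝ) (η : ℝ) (ν : I → J → ℝ)
    (hz : ∀ i j, 0 ≤ z i j)
    (hkkt : KKT E m wHat z θ η ν)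
    (j : J) (hedge : ∃ i : I, (i, j) ∈ E ∧ 0 < z i j) :
    wHat j ≥ (∑ i, z i j) * η ∧
      ((∃ i : I, (i, j) ∈ E ∧ ∑ j', z i j' < 1) → wHat j = (∑ i, z i j) * η) := by
  obtain ⟨hθ, hη, hν, hstat, hcsθ, _, hcsν⟩ := hkkt
  obtain ⟨i, hiE, hiz⟩ := hedge
  have hR : 0 < ∑ i', z i' j :=
    lt_of_lt_of_le hiz (Finset.single_le_sum (fun i' _ => hz i' j) (Finset.mem_univ i))
  have hνz : ν i j = 0 := by
    have := hcsν i j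
    rcases mul_eq_zero.mp this with h | h
    · exact h
    · exact absurd h (ne_of_gt hiz)
  have h1 : wHat j / (∑ i', z i' j) = θ i + η := by
    rw [hstat i j hiE, hνz]; ring
  have hge : wHat j ≥ (∑ i, z i j) * η := by
    have : η ≤ wHat j / (∑ i', z i' j) := by
      rw [h1]; linarith [hθ i]
    calc (∑ i, z i j) * η ≤ (∑ i, z i j) * (wHat j / (∑ i', z i' j)) := by
          exact mul_le_mul_of_nonneg_left this hR.le
      _ = wHat j := by field_simp
  refine ⟨hge, ?_⟩
  rintro ⟨i', hi'E, hL⟩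
  have hθ0 : θ i' = 0 := by
    have := hcsθ i'
    rcases mul_eq_zero.mp this with h | h
    · exact h
    · exact absurd h (by linarith)
  have h2 : wHat j / (∑ i', z i' j) ≤ η := by
    have := hstat i' j hi'E
    rw [hθ0] at this
    linarith [hν i' j]
  have h3 : η ≤ wHat j / (∑ i', z i' j) := by rw [h1]; linarith [hθ i]
  have : wHat j / (∑ i', z i' j) = η := le_antisymm h2 h3
  field_simp at this
  linarith
end
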